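/- arXiv:2408.03017 — 4 statements merged into one kernel-verified Lean document; each statement's English description precedes it below -/
import Mathlib

section
/- Let σ : [0,L] × ℝ → ℝ be continuous, continuously differentiable in θ, with |∂σ/∂θ(s,θ)| ≤ K for all (s,θ) and with 0 ≤ K < (π/(2L))². Then the two-point boundary value problem θ''(s) = σ(s, θ(s)) with θ(0) = 0 and θ'(L) = 0 has a solution. -/
open Real Set MeasureTheory intervalIntegral Function

namespace BVPaux

noncomputable def pj (L x : ℝ) : ℝ := max 0 (min x L)

lemma pj_mem {L : ℝ} (hL : 0 ≤ L) (x : ℝ) : pj L x ∈ Icc 0 L :=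
  ⟨le_max_left _ _, max_le hL (min_le_right _ _)⟩

lemma pj_eq {L x : ℝ} (hx : x ∈ Icc 0 L) : pj L x = x := by
  unfold pj
  rw [min_eq_left hx.2, max_eq_right hx.1]

lemma pj_idem {L : ℝ} (hL : 0 ≤ L) (x : ℝ) : pj L (pj L x) = pj L x :=
  pj_eq (pj_mem hL x)

lemma pj_cont (L : ℝ) : Continuous (pj L) :=
  continuous_const.max (continuous_id.min continuous_const)

lemma pj_lip (L x y : ℝ) : |pj L x - pj L y| ≤ |x - y| := by
  unfold pj
  rw [max_comm 0 (min x L), max_comm 0 (min y L)]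
  refine (abs_max_sub_max_le_abs _ _ _).trans ?_
  refine (abs_min_sub_min_le_max x L y L).trans ?_
  simp

noncomputable def gF (L : ℝ) (σ : ℝ → ℝ → ℝ) (θ : ℝ → ℝ) (t : ℝ) : ℝ :=
  σ (pj L t) (θ (pj L t))

lemma gF_cont {L : ℝ} (hL : 0 ≤ L) {σ : ℝ → ℝ → ℝ}
    (hσc : ContinuousOn (Function.uncurry σ) (Icc 0 L ×ˢ (univ : Set ℝ)))
    {θ : ℝ → ℝ} (hθ : Continuous θ) : Continuous (gF L σ θ) := by
  have : Continuous fun t => (pj L t, θ (pj L t)) :=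
    (pj_cont L).prodMk (hθ.comp (pj_cont L))
  exact hσc.comp_continuous this fun t => ⟨pj_mem hL t, mem_univ _⟩

lemma gF_pj {L : ℝ} (hL : 0 ≤ L) (σ : ℝ → ℝ → ℝ) (θ : ℝ → ℝ) (t : ℝ) :
    gF L σ θ (pj L t) = gF L σ θ t := by
  unfold gF; rw [pj_idem hL]

lemma gF_bound {L : ℝ} (hL : 0 ≤ L) {σ : ℝ → ℝ → ℝ}
    (hσc : ContinuousOn (Function.uncurry σ) (Icc 0 L ×ˢ (univ : Set ℝ)))
    {θ : ℝ → ℝ} (hθ : Continuous θ) :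
    ∃ C : ℝ, 0 ≤ C ∧ ∀ t, |gF L σ θ t| ≤ C := by
  obtain ⟨C, hC⟩ := isCompact_Icc.exists_bound_of_continuousOn
    (gF_cont hL hσc hθ).continuousOn (s := Icc 0 L)
  refine ⟨max C 0, le_max_right _ _, fun t => ?_⟩
  have := hC (pj L t) (pj_mem hL t)
  rw [gF_pj hL] at this
  exact le_trans (by simpa using this) (le_max_left _ _)

noncomputable def Tm (L : ℝ) (σ : ℝ → ℝ → ℝ) (θ : ℝ → ℝ) (s : ℝ) : ℝ :=
  - ∫ t in (0:ℝ)..L, min (pj L s) t * gF L σ θ t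

lemma Tm_pj {L : ℝ} (hL : 0 ≤ L) (σ : ℝ → ℝ → ℝ) (θ : ℝ → ℝ) (s : ℝ) :
    Tm L σ θ (pj L s) = Tm L σ θ s := by
  unfold Tm; rw [pj_idem hL]

lemma min_mul_intble {L : ℝ} (hL : 0 ≤ L) {σ : ℝ → ℝ → ℝ}
    (hσc : ContinuousOn (Function.uncurry σ) (Icc 0 L ×ˢ (univ : Set ℝ)))
    {θ : ℝ → ℝ} (hθ : Continuous θ) (c a b : ℝ) :
    IntervalIntegrable (fun t => min c t * gF L σ θ t) volume a b :=
  ((continuous_const.min continuous_id).mul (gF_cont hL hσc hθ)).intervalIntegrable a b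

lemma Tm_cont {L : ℝ} (hL : 0 ≤ L) {σ : ℝ → ℝ → ℝ}
    (hσc : ContinuousOn (Function.uncurry σ) (Icc 0 L ×ˢ (univ : Set ℝ)))
    {θ : ℝ → ℝ} (hθ : Continuous θ) : Continuous (Tm L σ θ) := by
  obtain ⟨C, hC0, hC⟩ := gF_bound hL hσc hθ
  have hlip : LipschitzWith (C * L).toNNReal (Tm L σ θ) := by
    refine LipschitzWith.of_dist_le_mul fun x y => ?_
    rw [Real.coe_toNNReal _ (by positivity), Real.dist_eq, Real.dist_eq]
    have h1 : Tm L σ θ x - Tm L σ θ y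
        = - ∫ t in (0:ℝ)..L, (min (pj L x) t - min (pj L y) t) * gF L σ θ t := by
      unfold Tm
      rw [neg_sub_neg, ← integral_sub (min_mul_intble hL hσc hθ _ _ _)
        (min_mul_intble hL hσc hθ _ _ _), ← intervalIntegral.integral_neg]
      congr 1
      ext t
      ring
    rw [h1, abs_neg, ← Real.norm_eq_abs]
    calc ‖∫ t in (0:ℝ)..L, (min (pj L x) t - min (pj L y) t) * gF L σ θ t‖
        ≤ (|x - y| * C) * |L - 0| := by
          refine intervalIntegral.norm_integral_le_of_norm_le_const fun t _ => ?_
          rw [Real.norm_eq_abs, abs_mul]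
          have h2 : |min (pj L x) t - min (pj L y) t| ≤ |x - y| := by
            refine (abs_min_sub_min_le_max _ _ _ _).trans ?_
            simpa using pj_lip L x y
          exact mul_le_mul h2 (hC t) (abs_nonneg _) (abs_nonneg _)
      _ = C * L * |x - y| := by rw [sub_zero, abs_of_nonneg hL]; ring
  exact hlip.continuous

lemma Tm_bdd {L : ℝ} (hL : 0 ≤ L) {σ : ℝ → ℝ → ℝ}
    (hσc : ContinuousOn (Function.uncurry σ) (Icc 0 L ×ˢ (univ : Set ℝ)))
    {θ : ℝ → ℝ} (hθ : Continuous θ) :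
    ∃ C, ∀ x y, dist (Tm L σ θ x) (Tm L σ θ y) ≤ C := by
  obtain ⟨C, hC0, hC⟩ := gF_bound hL hσc hθ
  have key : ∀ x, |Tm L σ θ x| ≤ L * C * L := by
    intro x
    rw [Tm, abs_neg, ← Real.norm_eq_abs]
    have := intervalIntegral.norm_integral_le_of_norm_le_const
      (f := fun t => min (pj L x) t * gF L σ θ t) (C := L * C) (a := 0) (b := L) ?_
    · calc ‖∫ t in (0:ℝ)..L, min (pj L x) t * gF L σ θ t‖ ≤ L * C * |L - 0| := this
        _ = L * C * L := by rw [sub_zero, abs_of_nonneg hL]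
    · intro t ht
      rw [Real.norm_eq_abs, abs_mul]
      have h1 : |min (pj L x) t| ≤ L := by
        rw [uIoc_of_le hL] at ht
        have hx := pj_mem hL x
        rw [abs_of_nonneg (le_min hx.1 ht.1.le)]
        exact min_le_of_left_le hx.2
      exact mul_le_mul h1 (hC t) (abs_nonneg _) hL
  exact ⟨L * C * L + L * C * L, fun x y => (abs_sub (Tm L σ θ x) (Tm L σ θ y)).trans
    (add_le_add (key x) (key y))⟩

variable {L K : ℝ} {σ : ℝ → ℝ → ℝ}

/-- Lipschitz continuity of `σ s` from the derivative bound. -/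
lemma sig_lip (hK0 : 0 ≤ K) (hσd : ∀ s ∈ Icc 0 L, ContDiff ℝ 1 (σ s))
    (hlip : ∀ s ∈ Icc 0 L, ∀ t : ℝ, |deriv (σ s) t| ≤ K)
    {s : ℝ} (hs : s ∈ Icc 0 L) (x y : ℝ) : |σ s x - σ s y| ≤ K * |x - y| := by
  have hl : LipschitzWith K.toNNReal (σ s) := by
    refine lipschitzWith_of_nnnorm_deriv_le ((hσd s hs).differentiable one_ne_zero) fun t => ?_
    rw [← NNReal.coe_le_coe, coe_nnnorm, Real.coe_toNNReal _ hK0, Real.norm_eq_abs]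
    exact hlip s hs t
  have := hl.dist_le_mul x y
  rwa [Real.dist_eq, Real.dist_eq, Real.coe_toNNReal _ hK0] at this

lemma int_min_le (hL : 0 < L) {s : ℝ} (hs : s ∈ Icc 0 L) :
    ∫ t in (0:ℝ)..L, min s t ≤ L * s := by
  have i1 : IntervalIntegrable (fun t => min s t) volume 0 s :=
    (continuous_const.min continuous_id).intervalIntegrable _ _
  have i2 : IntervalIntegrable (fun t => min s t) volume s L :=
    (continuous_const.min continuous_id).intervalIntegrable _ _
  rw [← integral_add_adjacent_intervals i1 i2]
  have e1 : ∫ t in (0:ℝ)..s, min s t = ∫ t in (0:ℝ)..s, t := by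
    refine integral_congr fun t ht => ?_
    rw [uIcc_of_le hs.1] at ht
    exact min_eq_right ht.2
  have e2 : ∫ t in s..L, min s t = ∫ t in s..L, s := by
    refine integral_congr fun t ht => ?_
    rw [uIcc_of_le hs.2] at ht
    exact min_eq_left ht.1
  rw [e1, e2, integral_id, intervalIntegral.integral_const, smul_eq_mul]
  nlinarith [hs.1, hs.2, sq_nonneg s]

lemma int_min_sin_le (hL : 0 < L) {b : ℝ} (hb : 0 < b) (hbL : b * L ≤ π / 2)
    {s : ℝ} (hs : s ∈ Icc 0 L) :
    ∫ t in (0:ℝ)..L, min s t * sin (b * t) ≤ sin (b * s) / b ^ 2 := by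
  have hsin : ∀ t : ℝ, HasDerivAt (fun u => sin (b * u)) (b * cos (b * t)) t := by
    intro t
    have h := (Real.hasDerivAt_sin (b * t)).comp t ((hasDerivAt_id t).const_mul b)
    exact h.congr_deriv (by ring)
  have hcos : ∀ t : ℝ, HasDerivAt (fun u => cos (b * u)) (-(b * sin (b * t))) t := by
    intro t
    have h := (Real.hasDerivAt_cos (b * t)).comp t ((hasDerivAt_id t).const_mul b)
    exact h.congr_deriv (by ring)
  have i1 : IntervalIntegrable (fun t => min s t * sin (b * t)) volume 0 s :=
    ((continuous_const.min continuous_id).mul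
      (Real.continuous_sin.comp (continuous_const.mul continuous_id))).intervalIntegrable _ _
  have i2 : IntervalIntegrable (fun t => min s t * sin (b * t)) volume s L :=
    ((continuous_const.min continuous_id).mul
      (Real.continuous_sin.comp (continuous_const.mul continuous_id))).intervalIntegrable _ _
  rw [← integral_add_adjacent_intervals i1 i2]
  have e1 : ∫ t in (0:ℝ)..s, min s t * sin (b * t)
      = (sin (b * s) - b * s * cos (b * s)) / b ^ 2 := by
    have e1a : ∫ t in (0:ℝ)..s, min s t * sin (b * t) = ∫ t in (0:ℝ)..s, t * sin (b * t) := by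
      refine integral_congr fun t ht => ?_
      rw [uIcc_of_le hs.1] at ht
      rw [min_eq_right ht.2]
    have hF : ∀ t : ℝ, HasDerivAt (fun u => (sin (b * u) - b * u * cos (b * u)) / b ^ 2)
        (t * sin (b * t)) t := by
      intro t
      have h2 : HasDerivAt (fun u => b * u * cos (b * u))
          (b * cos (b * t) + b * t * -(b * sin (b * t))) t := by
        have := ((hasDerivAt_id t).const_mul b).mul (hcos t)
        exact this.congr_deriv (by simp only [id]; ring)
      have h3 := ((hsin t).sub h2).div_const (b ^ 2)
      exact h3.congr_deriv (by field_simp; ring)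
    rw [e1a, integral_eq_sub_of_hasDerivAt (fun t _ => hF t)
      ((continuous_id.mul (Real.continuous_sin.comp
        (continuous_const.mul continuous_id))).intervalIntegrable _ _)]
    simp
  have e2 : ∫ t in s..L, min s t * sin (b * t) = s * ((cos (b * s) - cos (b * L)) / b) := by
    have e2a : ∫ t in s..L, min s t * sin (b * t) = ∫ t in s..L, s * sin (b * t) := by
      refine integral_congr fun t ht => ?_
      rw [uIcc_of_le hs.2] at ht
      rw [min_eq_left ht.1]
    have hG : ∀ t : ℝ, HasDerivAt (fun u => -cos (b * u) / b) (sin (b * t)) t := by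
      intro t
      have h3 := ((hcos t).neg).div_const b
      exact h3.congr_deriv (by field_simp)
    rw [e2a, intervalIntegral.integral_const_mul, integral_eq_sub_of_hasDerivAt (fun t _ => hG t)
      ((Real.continuous_sin.comp (continuous_const.mul continuous_id)).intervalIntegrable _ _)]
    ring
  rw [e1, e2]
  have hcL : 0 ≤ cos (b * L) :=
    Real.cos_nonneg_of_mem_Icc ⟨by nlinarith [Real.pi_pos, hb.le, hL.le], hbL⟩
  have key : (sin (b * s) - b * s * cos (b * s)) / b ^ 2 + s * ((cos (b * s) - cos (b * L)) / b)
      = sin (b * s) / b ^ 2 - s * cos (b * L) / b := by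
    field_simp
    ring
  rw [key]
  have : 0 ≤ s * cos (b * L) / b := by
    have hs0 := hs.1
    positivity
  linarith


/-- Key one-step estimate for the integral operator. -/
lemma key_est (hL : 0 < L) (hK0 : 0 ≤ K)
    (hσc : ContinuousOn (Function.uncurry σ) (Icc 0 L ×ˢ (univ : Set ℝ)))
    (hσd : ∀ s ∈ Icc 0 L, ContDiff ℝ 1 (σ s))
    (hlip : ∀ s ∈ Icc 0 L, ∀ t : ℝ, |deriv (σ s) t| ≤ K)
    {θ₁ θ₂ : ℝ → ℝ} (hθ₁ : Continuous θ₁) (hθ₂ : Continuous θ₂)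
    {h : ℝ → ℝ} (hh : Continuous h)
    (hb : ∀ t ∈ Icc 0 L, |θ₁ t - θ₂ t| ≤ h t)
    {s : ℝ} (hs : s ∈ Icc 0 L) :
    |Tm L σ θ₁ s - Tm L σ θ₂ s| ≤ K * ∫ t in (0:ℝ)..L, min s t * h t := by
  have hps : pj L s = s := pj_eq hs
  have e1 : Tm L σ θ₁ s - Tm L σ θ₂ s
      = ∫ t in (0:ℝ)..L, min s t * (gF L σ θ₂ t - gF L σ θ₁ t) := by
    unfold Tm
    rw [hps, neg_sub_neg, ← integral_sub (min_mul_intble hL.le hσc hθ₂ _ _ _)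
      (min_mul_intble hL.le hσc hθ₁ _ _ _)]
    congr 1
    ext t
    ring
  rw [e1, ← Real.norm_eq_abs]
  calc ‖∫ t in (0:ℝ)..L, min s t * (gF L σ θ₂ t - gF L σ θ₁ t)‖
      ≤ ∫ t in (0:ℝ)..L, ‖min s t * (gF L σ θ₂ t - gF L σ θ₁ t)‖ :=
        norm_integral_le_integral_norm hL.le
    _ ≤ ∫ t in (0:ℝ)..L, K * (min s t * h t) := by
        refine integral_mono_on hL.le ?_ ?_ fun t ht => ?_
        · exact (((continuous_const.min continuous_id).mul
            ((gF_cont hL.le hσc hθ₂).sub (gF_cont hL.le hσc hθ₁))).norm).intervalIntegrable _ _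
        · exact (continuous_const.mul
            ((continuous_const.min continuous_id).mul hh)).intervalIntegrable _ _
        · have hpt : pj L t = t := pj_eq ht
          have hmin0 : 0 ≤ min s t := le_min hs.1 ht.1
          rw [Real.norm_eq_abs, abs_mul, abs_of_nonneg hmin0]
          have hg : |gF L σ θ₂ t - gF L σ θ₁ t| ≤ K * h t := by
            unfold gF
            rw [hpt]
            calc |σ t (θ₂ t) - σ t (θ₁ t)| ≤ K * |θ₂ t - θ₁ t| :=
                  sig_lip hK0 hσd hlip ht _ _
              _ ≤ K * h t := by
                  refine mul_le_mul_of_nonneg_left ?_ hK0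
                  rw [abs_sub_comm]
                  exact hb t ht
          calc min s t * |gF L σ θ₂ t - gF L σ θ₁ t| ≤ min s t * (K * h t) :=
                mul_le_mul_of_nonneg_left hg hmin0
            _ = K * (min s t * h t) := by ring
    _ = K * ∫ t in (0:ℝ)..L, min s t * h t := integral_const_mul _ _


/-- The integral operator as a self-map of bounded continuous functions. -/
noncomputable def TE (L : ℝ) (σ : ℝ → ℝ → ℝ) (hL : 0 ≤ L)
    (hσc : ContinuousOn (Function.uncurry σ) (Icc 0 L ×ˢ (univ : Set ℝ)))
    (θ : BoundedContinuousFunction ℝ ℝ) : BoundedContinuousFunction ℝ ℝ :=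
  ⟨⟨Tm L σ θ, Tm_cont hL hσc θ.continuous⟩, Tm_bdd hL hσc θ.continuous⟩

lemma TE_apply (L : ℝ) (σ : ℝ → ℝ → ℝ) (hL : 0 ≤ L)
    (hσc : ContinuousOn (Function.uncurry σ) (Icc 0 L ×ˢ (univ : Set ℝ)))
    (θ : BoundedContinuousFunction ℝ ℝ) (x : ℝ) :
    TE L σ hL hσc θ x = Tm L σ (⇑θ) x := rfl


/-- From a continuous right-hand side `g`, build the C² function with
`θ'' = g`, `θ 0 = 0`, `θ' L = 0`, represented by the Green's function on `[0, L]`. -/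
lemma assemble {g : ℝ → ℝ} (hgc : Continuous g) (L : ℝ) (hL : 0 ≤ L) :
    ∃ θ : ℝ → ℝ, ContDiff ℝ 2 θ ∧ (∀ s, deriv (deriv θ) s = g s) ∧ θ 0 = 0 ∧
      deriv θ L = 0 ∧ ∀ s ∈ Icc 0 L, θ s = - ∫ t in (0:ℝ)..L, min s t * g t := by
  set A : ℝ → ℝ := fun u => ∫ t in (0:ℝ)..u, g t with hA_def
  set B : ℝ → ℝ := fun u => ∫ t in (0:ℝ)..u, t * g t with hB_def
  have hA : ∀ s, HasDerivAt A (g s) s := by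
    intro s
    rw [hA_def]
    exact integral_hasDerivAt_right (hgc.intervalIntegrable _ _)
      (hgc.stronglyMeasurableAtFilter _ _) hgc.continuousAt
  have hB : ∀ s, HasDerivAt B (s * g s) s := by
    intro s
    rw [hB_def]
    exact integral_hasDerivAt_right ((continuous_id.mul hgc).intervalIntegrable _ _)
      ((continuous_id.mul hgc).stronglyMeasurableAtFilter _ _)
      (continuous_id.mul hgc).continuousAt
  have hder : ∀ s, HasDerivAt (fun u => u * (A u - A L) - B u) (A s - A L) s := by
    intro s
    have h1 : HasDerivAt (fun u => u * (A u - A L)) (1 * (A s - A L) + s * g s) s :=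
      (hasDerivAt_id s).mul ((hA s).sub_const (A L))
    have h2 := h1.sub (hB s)
    exact h2.congr_deriv (by ring)
  have hd1 : deriv (fun u => u * (A u - A L) - B u) = fun s => A s - A L :=
    funext fun s => (hder s).deriv
  have hd2 : deriv (fun u => A u - A L) = g :=
    funext fun s => (((hA s).sub_const (A L))).deriv
  refine ⟨fun u => u * (A u - A L) - B u, ?_, ?_, ?_, ?_, ?_⟩
  · rw [show (2 : WithTop ℕ∞) = 1 + 1 by norm_num]
    refine contDiff_succ_iff_deriv.2 ⟨fun s => (hder s).differentiableAt, ?_, ?_⟩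
    · intro h
      simp at h
    · rw [hd1]
      refine contDiff_one_iff_deriv.2 ⟨fun s => ((hA s).sub_const (A L)).differentiableAt, ?_⟩
      rw [hd2]
      exact hgc
  · intro s
    rw [hd1, hd2]
  · have hB0 : B 0 = 0 := by rw [hB_def]; simp
    simp [hB0]
  · rw [hd1]
    simp
  · intro u hu
    have i01 : IntervalIntegrable (fun t => min u t * g t) volume 0 u :=
      ((continuous_const.min continuous_id).mul hgc).intervalIntegrable _ _
    have i02 : IntervalIntegrable (fun t => min u t * g t) volume u L :=
      ((continuous_const.min continuous_id).mul hgc).intervalIntegrable _ _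
    have e1 : ∫ t in (0:ℝ)..u, min u t * g t = B u := by
      rw [hB_def]
      refine integral_congr fun t ht => ?_
      rw [uIcc_of_le hu.1] at ht
      rw [min_eq_right ht.2]
    have e2 : ∫ t in u..L, min u t * g t = u * (A L - A u) := by
      have e2a : ∫ t in u..L, min u t * g t = ∫ t in u..L, u * g t := by
        refine integral_congr fun t ht => ?_
        rw [uIcc_of_le hu.2] at ht
        rw [min_eq_left ht.1]
      have e2b : A u + ∫ t in u..L, g t = A L := by
        rw [hA_def]
        exact integral_add_adjacent_intervals (hgc.intervalIntegrable _ _)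
          (hgc.intervalIntegrable _ _)
      rw [e2a, intervalIntegral.integral_const_mul]
      have : ∫ t in u..L, g t = A L - A u := by linarith
      rw [this]
    rw [← integral_add_adjacent_intervals i01 i02, e1, e2]
    ring

end BVPaux


open BVPaux

/-- existence of a solution to the two-point boundary value problem
`θ'' = σ(s, θ)`, `θ(0) = 0`, `θ'(L) = 0`, when `σ` is continuous on `[0,L] × ℝ`,
continuously differentiable in `θ`, with `|∂σ/∂θ| ≤ K` and `0 ≤ K < (π/(2L))²`. -/
theorem bvp_exists_solution (L K : ℝ) (hL : 0 < L) (σ : ℝ → ℝ → ℝ)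
    (hσc : ContinuousOn (Function.uncurry σ) (Icc 0 L ×ˢ (univ : Set ℝ)))
    (hσd : ∀ s ∈ Icc 0 L, ContDiff ℝ 1 (σ s))
    (hK0 : 0 ≤ K) (hK : K < (π / (2 * L)) ^ 2)
    (hlip : ∀ s ∈ Icc 0 L, ∀ t : ℝ, |deriv (σ s) t| ≤ K) :
    ∃ θ : ℝ → ℝ, ContDiff ℝ 2 θ ∧
      (∀ s ∈ Icc 0 L, deriv (deriv θ) s = σ s (θ s)) ∧
      θ 0 = 0 ∧ deriv θ L = 0 := by
  have hL0 : (0:ℝ) ≤ L := hL.le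
  have hπ : (0:ℝ) < π := Real.pi_pos
  set a : ℝ := π / (2 * L) with ha_def
  have ha0 : 0 < a := by rw [ha_def]; positivity
  set b : ℝ := Real.sqrt ((K + a ^ 2) / 2) with hb_def
  have hb2 : b ^ 2 = (K + a ^ 2) / 2 := Real.sq_sqrt (by positivity)
  have hKb2 : K < b ^ 2 := by rw [hb2]; linarith
  have hb0 : 0 < b := by
    rw [hb_def]
    exact Real.sqrt_pos.2 (by positivity)
  have hbne : b ≠ 0 := ne_of_gt hb0
  have hba : b ≤ a := by
    have h1 : b ≤ Real.sqrt (a ^ 2) := by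
      rw [hb_def]
      exact Real.sqrt_le_sqrt (by linarith)
    rwa [Real.sqrt_sq ha0.le] at h1
  have hbL : b * L ≤ π / 2 := by
    have h1 : a * L = π / 2 := by
      rw [ha_def]
      field_simp
    calc b * L ≤ a * L := mul_le_mul_of_nonneg_right hba hL0
      _ = π / 2 := h1
  set q : ℝ := K / b ^ 2 with hq_def
  have hq0 : 0 ≤ q := by rw [hq_def]; positivity
  have hq1 : q < 1 := by
    rw [hq_def]
    exact (div_lt_one (by positivity)).2 hKb2
  set C : ℝ := K * L * (π / (2 * b)) with hC_def
  have hC0 : 0 ≤ C := by rw [hC_def]; positivity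
  set T : BoundedContinuousFunction ℝ ℝ → BoundedContinuousFunction ℝ ℝ := TE L σ hL0 hσc
    with hT_def
  -- main iterated estimate
  have est : ∀ n : ℕ, ∀ θ₁ θ₂ : BoundedContinuousFunction ℝ ℝ, ∀ s ∈ Icc 0 L,
      |(T^[n+1] θ₁) s - (T^[n+1] θ₂) s| ≤ dist θ₁ θ₂ * C * q ^ n * sin (b * s) := by
    intro n
    induction n with
    | zero =>
      intro θ₁ θ₂ s hs
      simp only [zero_add, Function.iterate_one]
      have hd0 : (0:ℝ) ≤ dist θ₁ θ₂ := dist_nonneg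
      have h0 : |Tm L σ (⇑θ₁) s - Tm L σ (⇑θ₂) s|
          ≤ K * ∫ t in (0:ℝ)..L, min s t * dist θ₁ θ₂ :=
        key_est hL hK0 hσc hσd hlip θ₁.continuous θ₂.continuous continuous_const
          (fun t _ => by
            rw [← Real.dist_eq]
            exact BoundedContinuousFunction.dist_coe_le_dist t) hs
      have e2 : ∫ t in (0:ℝ)..L, min s t * dist θ₁ θ₂
          = (∫ t in (0:ℝ)..L, min s t) * dist θ₁ θ₂ := integral_mul_const _ _
      have hbs1 : b * s ≤ π / 2 :=
        le_trans (mul_le_mul_of_nonneg_left hs.2 hb0.le) hbL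
      have hsin := Real.mul_le_sin (mul_nonneg hb0.le hs.1) hbs1
      have hsle : s ≤ π / (2 * b) * sin (b * s) := by
        have h3 : s = π / (2 * b) * (2 / π * (b * s)) := by
          field_simp
        calc s = π / (2 * b) * (2 / π * (b * s)) := h3
          _ ≤ π / (2 * b) * sin (b * s) :=
              mul_le_mul_of_nonneg_left hsin (by positivity)
      calc |(T θ₁) s - (T θ₂) s|
          ≤ K * ((∫ t in (0:ℝ)..L, min s t) * dist θ₁ θ₂) := by rw [← e2]; exact h0
        _ ≤ K * ((L * (π / (2 * b) * sin (b * s))) * dist θ₁ θ₂) := by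
            refine mul_le_mul_of_nonneg_left (mul_le_mul_of_nonneg_right ?_ hd0) hK0
            exact (int_min_le hL hs).trans (mul_le_mul_of_nonneg_left hsle hL0)
        _ = dist θ₁ θ₂ * C * q ^ 0 * sin (b * s) := by
            rw [hC_def, pow_zero]
            ring
    | succ n ih =>
      intro θ₁ θ₂ s hs
      have hd0 : (0:ℝ) ≤ dist θ₁ θ₂ := dist_nonneg
      have hD0 : 0 ≤ dist θ₁ θ₂ * C * q ^ n :=
        mul_nonneg (mul_nonneg hd0 hC0) (pow_nonneg hq0 n)
      have hcont : Continuous fun t => dist θ₁ θ₂ * C * q ^ n * sin (b * t) :=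
        continuous_const.mul (Real.continuous_sin.comp (continuous_const.mul continuous_id))
      have h0 : |Tm L σ (⇑(T^[n+1] θ₁)) s - Tm L σ (⇑(T^[n+1] θ₂)) s|
          ≤ K * ∫ t in (0:ℝ)..L, min s t * (dist θ₁ θ₂ * C * q ^ n * sin (b * t)) :=
        key_est hL hK0 hσc hσd hlip (T^[n+1] θ₁).continuous (T^[n+1] θ₂).continuous hcont
          (fun t ht => ih θ₁ θ₂ t ht) hs
      have e2 : ∫ t in (0:ℝ)..L, min s t * (dist θ₁ θ₂ * C * q ^ n * sin (b * t))
          = (dist θ₁ θ₂ * C * q ^ n) * ∫ t in (0:ℝ)..L, min s t * sin (b * t) := by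
        rw [← intervalIntegral.integral_const_mul]
        refine integral_congr fun t _ => by ring
      rw [Function.iterate_succ_apply' T (n+1) θ₁, Function.iterate_succ_apply' T (n+1) θ₂]
      calc |(T (T^[n+1] θ₁)) s - (T (T^[n+1] θ₂)) s|
          ≤ K * ((dist θ₁ θ₂ * C * q ^ n) * ∫ t in (0:ℝ)..L, min s t * sin (b * t)) := by
            rw [← e2]; exact h0
        _ ≤ K * ((dist θ₁ θ₂ * C * q ^ n) * (sin (b * s) / b ^ 2)) := by
            refine mul_le_mul_of_nonneg_left
              (mul_le_mul_of_nonneg_left (int_min_sin_le hL hb0 hbL hs) hD0) hK0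
        _ = dist θ₁ θ₂ * C * q ^ (n + 1) * sin (b * s) := by
            rw [hq_def]
            field_simp
            have hb2ne : b ^ 2 * (b ^ 2)⁻¹ = 1 := mul_inv_cancel₀ (by positivity)
            rw [pow_succ]
            linear_combination (-(dist θ₁ θ₂ * C * sin (b * s) * (K / b ^ 2) ^ n * K)) * hb2ne
  -- Lipschitz bound for the iterates
  have lipn : ∀ n : ℕ, ∀ θ₁ θ₂ : BoundedContinuousFunction ℝ ℝ,
      dist (T^[n+1] θ₁) (T^[n+1] θ₂) ≤ C * q ^ n * dist θ₁ θ₂ := by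
    intro n θ₁ θ₂
    have hcq : 0 ≤ C * q ^ n := mul_nonneg hC0 (pow_nonneg hq0 n)
    rw [BoundedContinuousFunction.dist_le (mul_nonneg hcq dist_nonneg)]
    intro x
    have hxval : ∀ θ : BoundedContinuousFunction ℝ ℝ,
        (T^[n+1] θ) x = (T^[n+1] θ) (pj L x) := by
      intro θ
      rw [Function.iterate_succ_apply' T n θ]
      exact (Tm_pj hL0 σ _ x).symm
    rw [Real.dist_eq, hxval θ₁, hxval θ₂]
    calc |(T^[n+1] θ₁) (pj L x) - (T^[n+1] θ₂) (pj L x)|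
        ≤ dist θ₁ θ₂ * C * q ^ n * sin (b * pj L x) := est n θ₁ θ₂ (pj L x) (pj_mem hL0 x)
      _ ≤ dist θ₁ θ₂ * C * q ^ n * 1 :=
          mul_le_mul_of_nonneg_left (Real.sin_le_one _)
            (mul_nonneg (mul_nonneg dist_nonneg hC0) (pow_nonneg hq0 n))
      _ = C * q ^ n * dist θ₁ θ₂ := by ring
  -- choose a contracting iterate
  obtain ⟨n, hn⟩ : ∃ n : ℕ, C * q ^ n < 1 := by
    obtain ⟨n, hn⟩ := exists_pow_lt_of_lt_one (show (0:ℝ) < 1 / (C + 1) by positivity) hq1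
    refine ⟨n, ?_⟩
    calc C * q ^ n ≤ C * (1 / (C + 1)) := mul_le_mul_of_nonneg_left hn.le hC0
      _ < 1 := by
          rw [mul_one_div]
          exact (div_lt_one (by positivity)).2 (by linarith)
  have hcqn : (0:ℝ) ≤ C * q ^ n := mul_nonneg hC0 (pow_nonneg hq0 n)
  have hcw : ContractingWith (C * q ^ n).toNNReal (T^[n+1]) := by
    constructor
    · have h1 : ((C * q ^ n).toNNReal : ℝ) < ((1 : NNReal) : ℝ) := by
        rw [Real.coe_toNNReal _ hcqn]
        simpa using hn
      exact_mod_cast h1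
    · refine LipschitzWith.of_dist_le_mul fun x y => ?_
      rw [Real.coe_toNNReal _ hcqn]
      exact lipn n x y
  have hne : Nonempty (BoundedContinuousFunction ℝ ℝ) := ⟨0⟩
  set θ₀ := ContractingWith.fixedPoint (T^[n+1]) hcw with hθ₀_def
  have hfixit : (T^[n+1]) θ₀ = θ₀ := hcw.fixedPoint_isFixedPt
  have hTfix : T θ₀ = θ₀ := by
    have h1 : Function.IsFixedPt (T^[n+1]) (T θ₀) := by
      show (T^[n+1]) (T θ₀) = T θ₀
      calc (T^[n+1]) (T θ₀) = (T^[n+1+1]) θ₀ := (Function.iterate_succ_apply T (n+1) θ₀).symm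
        _ = T ((T^[n+1]) θ₀) := Function.iterate_succ_apply' T (n+1) θ₀
        _ = T θ₀ := by rw [hfixit]
    have h2 := hcw.fixedPoint_unique h1
    exact h2.trans hθ₀_def.symm
  have hfe : ∀ x, Tm L σ (⇑θ₀) x = θ₀ x := by
    intro x
    conv_rhs => rw [← hTfix]
    rfl
  -- assemble the solution
  obtain ⟨θf, hc2, hode, h00, hdL, hrep⟩ :=
    assemble (gF_cont hL0 hσc θ₀.continuous) L hL0
  have hfeq : ∀ u ∈ Icc 0 L, θf u = θ₀ u := by
    intro u hu
    rw [hrep u hu, ← hfe u]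
    unfold Tm
    rw [pj_eq hu]
  refine ⟨θf, hc2, ?_, h00, hdL⟩
  intro s hs
  rw [hode s]
  show gF L σ (⇑θ₀) s = σ s (θf s)
  unfold gF
  rw [pj_eq hs, hfeq s hs]
end

section
/- Let K ≥ 0 with √K L < π/2, and let J⁽²⁾ : [0,L] → ℝ solve J'' = q(s)J with J(0) = 0, J'(0) = 1, where q : [0,L] → ℝ is continuous with |q(s)| ≤ K. Then J⁽²⁾'(s) > 0 for all s ∈ [0,L]; in particular J⁽²⁾'(L) > 0. -/
open Real Set

private theorem shooting_aux (L K : ℝ) (hL : 0 < L) (hK : 0 < K)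
    (hKL : Real.sqrt K * L < π / 2) (q : ℝ → ℝ)
    (hqK : ∀ s ∈ Icc 0 L, |q s| ≤ K)
    (J : ℝ → ℝ) (hJ : ContDiff ℝ 2 J)
    (hode : ∀ s ∈ Icc 0 L, deriv (deriv J) s = q s * J s)
    (h0 : J 0 = 0) (h1 : deriv J 0 = 1) :
    ∀ s ∈ Icc 0 L, 0 < deriv J s := by
  by_contra hcon
  push_neg at hcon
  obtain ⟨s₀, hs₀, hs₀'⟩ := hcon
  have hJ1 : Differentiable ℝ J := hJ.differentiable (by norm_num)
  have hJc : Continuous J := hJ1.continuous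
  have hJ'1 : ContDiff ℝ 1 (deriv J) :=
    ((contDiff_succ_iff_deriv (n := 1)).mp (by exact_mod_cast hJ)).2.2
  have hJ'd : Differentiable ℝ (deriv J) := hJ'1.differentiable one_ne_zero
  have hJ'c : Continuous (deriv J) := hJ'd.continuous
  set S : Set ℝ := {s | s ∈ Icc 0 L ∧ deriv J s ≤ 0} with hS
  have hSne : S.Nonempty := ⟨s₀, hs₀, hs₀'⟩
  have hSclosed : IsClosed S := by
    have : S = Icc 0 L ∩ (deriv J) ⁻¹' (Iic 0) := by
      ext x
      simp only [hS, mem_setOf_eq, mem_inter_iff, mem_preimage, mem_Iic]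
    rw [this]
    exact isClosed_Icc.inter (isClosed_Iic.preimage hJ'c)
  have hSbdd : BddBelow S := ⟨0, fun x hx => hx.1.1⟩
  set t := sInf S with ht
  have htS : t ∈ S := hSclosed.csInf_mem hSne hSbdd
  have ht0 : 0 ≤ t := htS.1.1
  have htL : t ≤ L := htS.1.2
  have htpos : 0 < t := by
    rcases lt_or_eq_of_le ht0 with h | h
    · exact h
    · exfalso
      have h2 := htS.2
      rw [← h, h1] at h2
      linarith
  have hpos : ∀ s, 0 ≤ s → s < t → 0 < deriv J s := by
    intro s hs hst
    by_contra hns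
    push_neg at hns
    have : s ∈ S := ⟨⟨hs, le_of_lt (lt_of_lt_of_le hst htL)⟩, hns⟩
    exact absurd (csInf_le hSbdd this) (not_le.mpr hst)
  have hclos : t ∈ closure (Ico (0:ℝ) t) := by
    rw [closure_Ico (ne_of_lt htpos)]
    exact ⟨ht0, le_rfl⟩
  have hNB : (nhdsWithin t (Ico (0:ℝ) t)).NeBot :=
    mem_closure_iff_nhdsWithin_neBot.mp hclos
  have hJ't0 : deriv J t = 0 := by
    have hge : 0 ≤ deriv J t := by
      have htt : Filter.Tendsto (deriv J) (nhdsWithin t (Ico (0:ℝ) t)) (nhds (deriv J t)) :=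
        (hJ'c.continuousAt.continuousWithinAt (s := Ico (0:ℝ) t)).tendsto
      refine ge_of_tendsto htt ?_
      filter_upwards [self_mem_nhdsWithin] with x hx
      exact le_of_lt (hpos x hx.1 hx.2)
    linarith [htS.2]
  have hmono : StrictMonoOn J (Icc 0 t) := by
    apply strictMonoOn_of_deriv_pos (convex_Icc 0 t) (hJc.continuousOn)
    intro x hx
    rw [interior_Icc] at hx
    exact hpos x (le_of_lt hx.1) hx.2
  have hJt : 0 < J t := by
    have := hmono (left_mem_Icc.mpr ht0) (right_mem_Icc.mpr ht0) htpos
    rwa [h0] at this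
  have hJnonneg : ∀ s, 0 ≤ s → s < t → 0 ≤ J s := by
    intro s hs hst
    rcases eq_or_lt_of_le hs with h | h
    · rw [← h, h0]
    · have := hmono (left_mem_Icc.mpr ht0) ⟨hs, le_of_lt hst⟩ h
      rw [h0] at this; linarith
  set k := Real.sqrt K with hkdef
  have hk : 0 < k := Real.sqrt_pos.mpr hK
  have hk2 : k ^ 2 = K := Real.sq_sqrt (le_of_lt hK)
  set A := k * L with hA
  have hA0 : 0 ≤ A := mul_nonneg (le_of_lt hk) (le_of_lt hL)
  have hA2 : A < π / 2 := hKL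
  set W : ℝ → ℝ := fun s => k * s - Real.arctan (k * J s / deriv J s) with hW
  have hDW : ∀ x ∈ Ioo (0:ℝ) t, HasDerivAt W
      (k - 1 / (1 + (k * J x / deriv J x) ^ 2) *
        ((k * deriv J x * deriv J x - (k * J x) * deriv (deriv J) x) / (deriv J x) ^ 2)) x := by
    intro x hx
    have ha : 0 < deriv J x := hpos x (le_of_lt hx.1) hx.2
    have hJx : HasDerivAt J (deriv J x) x := (hJ1 x).hasDerivAt
    have hJ'x : HasDerivAt (deriv J) (deriv (deriv J) x) x := (hJ'd x).hasDerivAt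
    have hdiv : HasDerivAt (fun s => k * J s / deriv J s)
        ((k * deriv J x * deriv J x - (k * J x) * deriv (deriv J) x) / (deriv J x) ^ 2) x := by
      exact (hJx.const_mul k).div hJ'x (ne_of_gt ha)
    have := ((hasDerivAt_id x).const_mul k).sub hdiv.arctan
    refine this.congr_deriv ?_
    ring
  have hWmono : MonotoneOn W (Ico 0 t) := by
    apply monotoneOn_of_deriv_nonneg (convex_Ico 0 t)
    · apply ContinuousOn.sub (continuous_const.mul continuous_id).continuousOn
      apply Real.continuous_arctan.comp_continuousOn
      apply ContinuousOn.div ((continuous_const.mul hJc).continuousOn) hJ'c.continuousOn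
      intro x hx
      exact ne_of_gt (hpos x hx.1 hx.2)
    · rw [interior_Ico]
      intro x hx
      exact (hDW x hx).differentiableAt.differentiableWithinAt
    · rw [interior_Ico]
      intro x hx
      rw [(hDW x hx).deriv]
      have ha : 0 < deriv J x := hpos x (le_of_lt hx.1) hx.2
      have hb : 0 ≤ J x := hJnonneg x (le_of_lt hx.1) hx.2
      have hxL : x ∈ Icc (0:ℝ) L := ⟨le_of_lt hx.1, le_of_lt (lt_of_lt_of_le hx.2 htL)⟩
      have hqb : -(K) ≤ q x := neg_le_of_abs_le (hqK x hxL)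
      rw [hode x hxL]
      set a := deriv J x
      set b := J x
      have hu2 : a ^ 2 * (k * b / a) ^ 2 = k ^ 2 * b ^ 2 := by
        field_simp
      have hrhs : a ^ 2 * (1 + (k * b / a) ^ 2) = a ^ 2 + K * b ^ 2 := by
        rw [mul_add, mul_one, hu2, hk2]
      rw [sub_nonneg, one_div, inv_mul_eq_div, div_div, div_le_iff₀ (by positivity), hrhs]
      nlinarith [mul_nonneg (mul_nonneg hk.le (sq_nonneg b)) (by linarith : 0 ≤ q x + K)]
  have hW0 : W 0 = 0 := by
    simp [hW, h0]
  have key : ∀ s, 0 ≤ s → s < t → k * J s ≤ Real.tan A * deriv J s := by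
    intro s hs hst
    have hsI : s ∈ Ico (0:ℝ) t := ⟨hs, hst⟩
    have h1' := hWmono (⟨le_rfl, htpos⟩ : (0:ℝ) ∈ Ico (0:ℝ) t) hsI hs
    rw [hW0] at h1'
    have harc : Real.arctan (k * J s / deriv J s) ≤ A := by
      have hks : k * s ≤ A := by
        rw [hA]
        have : s ≤ L := le_trans (le_of_lt hst) htL
        nlinarith
      simp only [hW] at h1'
      linarith
    have htanle : k * J s / deriv J s ≤ Real.tan A := by
      have hmem1 : Real.arctan (k * J s / deriv J s) ∈ Ioo (-(π/2)) (π/2) :=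
        ⟨neg_pi_div_two_lt_arctan _, arctan_lt_pi_div_two _⟩
      have hmem2 : A ∈ Ioo (-(π/2)) (π/2) := ⟨by linarith [Real.pi_pos], hA2⟩
      have := Real.strictMonoOn_tan.monotoneOn hmem1 hmem2 harc
      rwa [Real.tan_arctan] at this
    have ha : 0 < deriv J s := hpos s hs hst
    rw [div_le_iff₀ ha] at htanle
    linarith
  have hFt : 0 ≤ Real.tan A * deriv J t - k * J t := by
    have htt : Filter.Tendsto (fun s => Real.tan A * deriv J s - k * J s)
        (nhdsWithin t (Ico (0:ℝ) t)) (nhds (Real.tan A * deriv J t - k * J t)) :=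
      (((continuous_const.mul hJ'c).sub
        (continuous_const.mul hJc)).continuousAt.continuousWithinAt (s := Ico (0:ℝ) t)).tendsto
    refine ge_of_tendsto htt ?_
    filter_upwards [self_mem_nhdsWithin] with x hx
    have := key x hx.1 hx.2
    simp only [sub_nonneg]
    linarith
  rw [hJ't0] at hFt
  nlinarith

/-- if `J'' = q(s) J` with `J(0) = 0`, `J'(0) = 1`, `|q| ≤ K`,
`K ≥ 0` and `√K · L < π/2`, then `J' > 0` on all of `[0, L]`
(in particular `J'(L) > 0`). -/
theorem shooting_solution_deriv_pos (L K : ℝ) (hL : 0 < L) (hK : 0 ≤ K)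
    (hKL : Real.sqrt K * L < π / 2) (q : ℝ → ℝ)
    (hq : ContinuousOn q (Icc 0 L)) (hqK : ∀ s ∈ Icc 0 L, |q s| ≤ K)
    (J : ℝ → ℝ) (hJ : ContDiff ℝ 2 J)
    (hode : ∀ s ∈ Icc 0 L, deriv (deriv J) s = q s * J s)
    (h0 : J 0 = 0) (h1 : deriv J 0 = 1) :
    ∀ s ∈ Icc 0 L, 0 < deriv J s := by
  set c : ℝ := (π / (4 * L)) ^ 2 with hc
  have hcpos : 0 < c := by positivity
  have hsc : Real.sqrt c = π / (4 * L) := Real.sqrt_sq (by positivity)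
  refine shooting_aux L (max K c) hL (lt_max_of_lt_right hcpos) ?_ q
    (fun s hs => le_trans (hqK s hs) (le_max_left _ _)) J hJ hode h0 h1
  rcases le_total K c with h | h
  · rw [max_eq_right h, hsc]
    rw [div_mul_eq_mul_div, mul_comm]
    rw [div_lt_iff₀ (by positivity)] at *
    nlinarith [Real.pi_pos]
  · rw [max_eq_left h]; exact hKL
end

section
/- Under the hypotheses that q : [0,L] → ℝ is continuous with |q(s)| ≤ K and KL² < π²/4, and g : [0,L] → ℝ is continuous, the Sturm–Liouville boundary value problem J''(s) = q(s)J(s) + g(s), J(0) = 0, J'(L) = 0 has a unique solution, given by J(s) = J⁽¹⁾(s) + v J⁽²⁾(s), where J⁽¹⁾ solves J'' = qJ + g with J(0) = J'(0) = 0, J⁽²⁾ solves J'' = qJ with J(0) = 0, J'(0) = 1, and v = −J⁽¹⁾'(L)/J⁽²⁾'(L). -/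
open Real Set

lemma deriv_diff_of_contDiff2 {f : ℝ → ℝ} (h : ContDiff ℝ 2 f) :
    Differentiable ℝ (deriv f) :=
  ((contDiff_succ_iff_deriv.mp (by exact_mod_cast h : ContDiff ℝ (1+1) f)).2.2).differentiable one_ne_zero

lemma slbvp_J2_deriv_pos (L K : ℝ) (hL : 0 < L) (hK : 0 < K)
    (hKL : K * L ^ 2 < π ^ 2 / 4) (q : ℝ → ℝ)
    (hqK : ∀ s ∈ Icc 0 L, |q s| ≤ K)
    (J₂ : ℝ → ℝ) (hJ₂ : ContDiff ℝ 2 J₂)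
    (hode₂ : ∀ s ∈ Icc 0 L, deriv (deriv J₂) s = q s * J₂ s)
    (hJ₂0 : J₂ 0 = 0) (hJ₂0' : deriv J₂ 0 = 1) :
    ∀ s ∈ Icc 0 L, 0 < deriv J₂ s := by
  have hd1 : Differentiable ℝ J₂ := hJ₂.differentiable (by norm_num)
  have hd2 : Differentiable ℝ (deriv J₂) := deriv_diff_of_contDiff2 hJ₂
  have hc2 : Continuous (deriv J₂) := hd2.continuous
  set k := Real.sqrt K with hkdef
  have hk : 0 < k := Real.sqrt_pos.mpr hK
  have hk2 : k ^ 2 = K := Real.sq_sqrt hK.le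
  have hkL : k * L < π / 2 := by
    have h1 : k * L = Real.sqrt (K * L ^ 2) := by
      rw [Real.sqrt_mul hK.le, Real.sqrt_sq hL.le]
    have h2 : Real.sqrt (K * L ^ 2) < Real.sqrt (π ^ 2 / 4) :=
      Real.sqrt_lt_sqrt (by positivity) hKL
    have h3 : Real.sqrt (π ^ 2 / 4) = π / 2 := by
      rw [show π ^ 2 / 4 = (π / 2) ^ 2 by ring, Real.sqrt_sq (by positivity)]
    rw [h1]; rw [h3] at h2; exact h2
  -- derivative of the Wronskian W
  set W : ℝ → ℝ := fun s => deriv J₂ s * Real.sin (k * s) - J₂ s * (k * Real.cos (k * s))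
    with hWdef
  have hsin : ∀ s : ℝ, HasDerivAt (fun s => Real.sin (k * s)) (Real.cos (k * s) * k) s := by
    intro s
    have := (Real.hasDerivAt_sin (k * s)).comp s ((hasDerivAt_id s).const_mul k)
    simp only [mul_one] at this; exact this
  have hcos : ∀ s : ℝ, HasDerivAt (fun s => k * Real.cos (k * s)) (k * (-Real.sin (k * s) * k)) s := by
    intro s
    have := ((Real.hasDerivAt_cos (k * s)).comp s ((hasDerivAt_id s).const_mul k)).const_mul k
    simpa [mul_comm, mul_assoc, mul_left_comm] using this
  have hW : ∀ s : ℝ, HasDerivAt W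
      (deriv (deriv J₂) s * Real.sin (k * s) + k ^ 2 * (J₂ s * Real.sin (k * s))) s := by
    intro s
    have h1 : HasDerivAt (fun s => deriv J₂ s * Real.sin (k * s))
        (deriv (deriv J₂) s * Real.sin (k * s) + deriv J₂ s * (Real.cos (k * s) * k)) s :=
      ((hd2 s).hasDerivAt).mul (hsin s)
    have h2 : HasDerivAt (fun s => J₂ s * (k * Real.cos (k * s)))
        (deriv J₂ s * (k * Real.cos (k * s)) + J₂ s * (k * (-Real.sin (k * s) * k))) s :=
      ((hd1 s).hasDerivAt).mul (hcos s)
    have := h1.sub h2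
    refine this.congr_deriv ?_
    ring
  -- key claim: deriv J₂ has no zero on [0,L]
  have hZ : ∀ t₀ ∈ Icc (0:ℝ) L, deriv J₂ t₀ ≠ 0 := by
    by_contra hcon
    push_neg at hcon
    obtain ⟨t, htmem, htz⟩ := hcon
    set Z : Set ℝ := Icc 0 L ∩ (deriv J₂) ⁻¹' {0} with hZdef
    have hZc : IsClosed Z := isClosed_Icc.inter (isClosed_singleton.preimage hc2)
    have hZne : Z.Nonempty := ⟨t, htmem, htz⟩
    have hZbdd : BddBelow Z := ⟨0, fun z hz => hz.1.1⟩
    set t₀ := sInf Z with ht₀def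
    have ht₀Z : t₀ ∈ Z := hZc.csInf_mem hZne hZbdd
    have ht₀mem : t₀ ∈ Icc (0:ℝ) L := ht₀Z.1
    have ht₀z : deriv J₂ t₀ = 0 := ht₀Z.2
    have ht₀pos : 0 < t₀ := by
      rcases lt_or_eq_of_le ht₀mem.1 with h | h
      · exact h
      · exfalso; rw [← h] at ht₀z; rw [hJ₂0'] at ht₀z; norm_num at ht₀z
    -- deriv J₂ > 0 on [0, t₀)
    have hlt : ∀ s ∈ Ico (0:ℝ) t₀, 0 < deriv J₂ s := by
      intro s hs
      rcases lt_or_ge 0 (deriv J₂ s) with h | h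
      · exact h
      · exfalso
        have hssub : Icc (0:ℝ) s ⊆ Icc 0 L :=
          Icc_subset_Icc le_rfl (hs.2.le.trans ht₀mem.2)
        have : (0:ℝ) ∈ Icc (deriv J₂ s) (deriv J₂ 0) := by
          constructor
          · exact h
          · rw [hJ₂0']; norm_num
        obtain ⟨c, hc, hcz⟩ := intermediate_value_Icc' hs.1 (hc2.continuousOn) this
        have hcZ : c ∈ Z := ⟨hssub hc, hcz⟩
        have : t₀ ≤ c := csInf_le hZbdd hcZ
        linarith [hc.2, hs.2]
    have hsubL : Icc (0:ℝ) t₀ ⊆ Icc 0 L := Icc_subset_Icc le_rfl ht₀mem.2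
    -- J₂ strictly monotone on [0, t₀]
    have hmono : StrictMonoOn J₂ (Icc 0 t₀) := by
      apply strictMonoOn_of_deriv_pos (convex_Icc 0 t₀) hd1.continuous.continuousOn
      intro x hx
      rw [interior_Icc] at hx
      exact hlt x ⟨hx.1.le, hx.2⟩
    have hJnonneg : ∀ s ∈ Icc (0:ℝ) t₀, 0 ≤ J₂ s := by
      intro s hs
      rcases eq_or_lt_of_le hs.1 with h | h
      · rw [← h, hJ₂0]
      · have := hmono ⟨le_rfl, ht₀pos.le⟩ hs h
        rw [hJ₂0] at this; exact this.le
    have hJt₀ : 0 < J₂ t₀ := by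
      have := hmono ⟨le_rfl, ht₀pos.le⟩ ⟨ht₀pos.le, le_rfl⟩ ht₀pos
      rwa [hJ₂0] at this
    -- W is monotone on [0, t₀]
    have hWmono : MonotoneOn W (Icc 0 t₀) := by
      apply monotoneOn_of_deriv_nonneg (convex_Icc 0 t₀)
      · have : Continuous W := by
          rw [hWdef]; fun_prop
        exact this.continuousOn
      · intro x hx
        exact ((hW x).differentiableAt).differentiableWithinAt
      · intro x hx
        rw [interior_Icc] at hx
        have hxL : x ∈ Icc (0:ℝ) L := hsubL ⟨hx.1.le, hx.2.le⟩
        rw [(hW x).deriv, hode₂ x hxL]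
        have hq1 : 0 ≤ q x + K := by
          have := hqK x hxL
          have := abs_le.mp this
          linarith [this.1]
        have hsx : 0 ≤ Real.sin (k * x) := by
          apply Real.sin_nonneg_of_nonneg_of_le_pi
          · exact mul_nonneg hk.le hx.1.le
          · nlinarith [Real.pi_pos, hx.2, ht₀mem.2, hk]
        have hJx : 0 ≤ J₂ x := hJnonneg x ⟨hx.1.le, hx.2.le⟩
        have : q x * J₂ x * Real.sin (k * x) + k ^ 2 * (J₂ x * Real.sin (k * x))
            = (q x + K) * (J₂ x * Real.sin (k * x)) := by rw [hk2]; ring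
        rw [this]
        exact mul_nonneg hq1 (mul_nonneg hJx hsx)
    have hW0 : W 0 = 0 := by simp [hWdef, hJ₂0]
    have hWt₀ : W 0 ≤ W t₀ := hWmono ⟨le_rfl, ht₀pos.le⟩ ⟨ht₀pos.le, le_rfl⟩ ht₀pos.le
    rw [hW0] at hWt₀
    have hcost : 0 < Real.cos (k * t₀) := by
      apply Real.cos_pos_of_mem_Ioo
      constructor
      · have : 0 < k * t₀ := mul_pos hk ht₀pos
        linarith [Real.pi_pos]
      · nlinarith [ht₀mem.2]
    have : W t₀ < 0 := by
      rw [hWdef]; simp only [ht₀z, zero_mul, zero_sub, neg_neg]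
      have : 0 < J₂ t₀ * (k * Real.cos (k * t₀)) := mul_pos hJt₀ (mul_pos hk hcost)
      linarith
    linarith
  -- conclude positivity via IVT
  intro s hs
  rcases lt_or_ge 0 (deriv J₂ s) with h | h
  · exact h
  · exfalso
    have : (0:ℝ) ∈ Icc (deriv J₂ s) (deriv J₂ 0) := by
      constructor
      · exact h
      · rw [hJ₂0']; norm_num
    obtain ⟨c, hc, hcz⟩ := intermediate_value_Icc' hs.1 (hc2.continuousOn) this
    exact hZ c (Icc_subset_Icc le_rfl hs.2 hc) hcz

/-- the Sturm–Liouville BVP `J'' = q J + g`, `J(0) = 0`, `J'(L) = 0`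
has a unique solution, given by `J = J⁽¹⁾ + v J⁽²⁾` with
`v = −J⁽¹⁾'(L)/J⁽²⁾'(L)`, where `J⁽¹⁾` solves `J'' = qJ + g`, `J(0) = J'(0) = 0`,
and `J⁽²⁾` solves `J'' = qJ`, `J(0) = 0`, `J'(0) = 1`.  Hypotheses: `q, g`
continuous on `[0,L]`, `|q| ≤ K`, `K L² < π²/4`. -/
theorem slbvp_unique_solution (L K : ℝ) (hL : 0 < L) (hK : 0 ≤ K)
    (hKL : K * L ^ 2 < π ^ 2 / 4) (q g : ℝ → ℝ)
    (hq : ContinuousOn q (Icc 0 L)) (hg : ContinuousOn g (Icc 0 L))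
    (hqK : ∀ s ∈ Icc 0 L, |q s| ≤ K)
    (J₁ : ℝ → ℝ) (hJ₁ : ContDiff ℝ 2 J₁)
    (hode₁ : ∀ s ∈ Icc 0 L, deriv (deriv J₁) s = q s * J₁ s + g s)
    (hJ₁0 : J₁ 0 = 0) (hJ₁0' : deriv J₁ 0 = 0)
    (J₂ : ℝ → ℝ) (hJ₂ : ContDiff ℝ 2 J₂)
    (hode₂ : ∀ s ∈ Icc 0 L, deriv (deriv J₂) s = q s * J₂ s)
    (hJ₂0 : J₂ 0 = 0) (hJ₂0' : deriv J₂ 0 = 1) :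
    -- existence: `J₁ + v J₂` with `v = −J₁'(L)/J₂'(L)` solves the BVP
    ((fun s => J₁ s + (-(deriv J₁ L) / deriv J₂ L) * J₂ s) 0 = 0 ∧
      deriv (fun s => J₁ s + (-(deriv J₁ L) / deriv J₂ L) * J₂ s) L = 0 ∧
      ∀ s ∈ Icc 0 L,
        deriv (deriv (fun s => J₁ s + (-(deriv J₁ L) / deriv J₂ L) * J₂ s)) s
          = q s * (J₁ s + (-(deriv J₁ L) / deriv J₂ L) * J₂ s) + g s) ∧
    -- uniqueness: any solution of the BVP coincides with it on `[0, L]`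
    (∀ J : ℝ → ℝ, ContDiff ℝ 2 J →
      (∀ s ∈ Icc 0 L, deriv (deriv J) s = q s * J s + g s) →
      J 0 = 0 → deriv J L = 0 →
      ∀ s ∈ Icc 0 L, J s = J₁ s + (-(deriv J₁ L) / deriv J₂ L) * J₂ s) := by
  -- replace K by a strictly positive K'
  have hL2 : (0:ℝ) < L ^ 2 := by positivity
  set K' : ℝ := (K + π ^ 2 / (4 * L ^ 2)) / 2 with hK'def
  have hpi2 : 0 < π ^ 2 / (4 * L ^ 2) := by positivity
  have hK'pos : 0 < K' := by rw [hK'def]; linarith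
  have hK'lt : K' * L ^ 2 < π ^ 2 / 4 := by
    rw [hK'def]
    have : π ^ 2 / (4 * L ^ 2) * L ^ 2 = π ^ 2 / 4 := by field_simp
    nlinarith
  have hKleK' : K ≤ K' := by
    rw [hK'def]
    have : K * L ^ 2 < π ^ 2 / (4 * L ^ 2) * L ^ 2 := by
      rw [show π ^ 2 / (4 * L ^ 2) * L ^ 2 = π ^ 2 / 4 by field_simp]; exact hKL
    nlinarith
  have hqK' : ∀ s ∈ Icc 0 L, |q s| ≤ K' := fun s hs => (hqK s hs).trans hKleK'
  have hpos := slbvp_J2_deriv_pos L K' hL hK'pos hK'lt q hqK' J₂ hJ₂ hode₂ hJ₂0 hJ₂0'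
  have hJ2L : 0 < deriv J₂ L := hpos L ⟨hL.le, le_rfl⟩
  have hJ2Lne : deriv J₂ L ≠ 0 := ne_of_gt hJ2L
  set v : ℝ := -(deriv J₁ L) / deriv J₂ L with hv
  -- differentiability facts
  have hd1₁ : Differentiable ℝ J₁ := hJ₁.differentiable (by norm_num)
  have hd2₁ : Differentiable ℝ (deriv J₁) := deriv_diff_of_contDiff2 hJ₁
  have hd1₂ : Differentiable ℝ J₂ := hJ₂.differentiable (by norm_num)
  have hd2₂ : Differentiable ℝ (deriv J₂) := deriv_diff_of_contDiff2 hJ₂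
  have hF' : ∀ s, HasDerivAt (fun s => J₁ s + v * J₂ s) (deriv J₁ s + v * deriv J₂ s) s :=
    fun s => ((hd1₁ s).hasDerivAt).add (((hd1₂ s).hasDerivAt).const_mul v)
  have hFderiv : deriv (fun s => J₁ s + v * J₂ s) = fun s => deriv J₁ s + v * deriv J₂ s :=
    funext fun s => (hF' s).deriv
  have hF'' : ∀ s, HasDerivAt (fun s => deriv J₁ s + v * deriv J₂ s)
      (deriv (deriv J₁) s + v * deriv (deriv J₂) s) s :=
    fun s => ((hd2₁ s).hasDerivAt).add (((hd2₂ s).hasDerivAt).const_mul v)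
  -- positivity of J₂ on (0, L]
  have hJ₂mono : StrictMonoOn J₂ (Icc 0 L) := by
    apply strictMonoOn_of_deriv_pos (convex_Icc 0 L) hd1₂.continuous.continuousOn
    intro x hx
    rw [interior_Icc] at hx
    exact hpos x ⟨hx.1.le, hx.2.le⟩
  have hJ₂pos : ∀ t ∈ Ioc (0:ℝ) L, 0 < J₂ t := by
    intro t ht
    have := hJ₂mono ⟨le_rfl, hL.le⟩ ⟨ht.1.le, ht.2⟩ ht.1
    rwa [hJ₂0] at this
  refine ⟨⟨?_, ?_, ?_⟩, ?_⟩
  · simp [hJ₁0, hJ₂0]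
  · rw [hFderiv]
    simp only
    rw [hv]
    field_simp
    ring
  · intro s hs
    rw [hFderiv, (hF'' s).deriv, hode₁ s hs, hode₂ s hs]
    ring
  -- uniqueness
  · intro J hJc hodeJ hJ0 hJ'L s hs
    have hd1J : Differentiable ℝ J := hJc.differentiable (by norm_num)
    have hd2J : Differentiable ℝ (deriv J) := deriv_diff_of_contDiff2 hJc
    set D : ℝ → ℝ := fun t => J t - (J₁ t + v * J₂ t) with hDdef
    have hdD : Differentiable ℝ D := hd1J.sub (hd1₁.add (hd1₂.const_mul v))
    have hD' : ∀ t, HasDerivAt D (deriv J t - (deriv J₁ t + v * deriv J₂ t)) t :=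
      fun t => ((hd1J t).hasDerivAt).sub (hF' t)
    have hDderiv : deriv D = fun t => deriv J t - (deriv J₁ t + v * deriv J₂ t) :=
      funext fun t => (hD' t).deriv
    have hdD2 : Differentiable ℝ (deriv D) := by
      rw [hDderiv]; exact hd2J.sub (hd2₁.add (hd2₂.const_mul v))
    have hD'' : ∀ t, HasDerivAt (deriv D)
        (deriv (deriv J) t - (deriv (deriv J₁) t + v * deriv (deriv J₂) t)) t := by
      rw [hDderiv]
      exact fun t => ((hd2J t).hasDerivAt).sub (hF'' t)
    have hodeD : ∀ t ∈ Icc (0:ℝ) L, deriv (deriv D) t = q t * D t := by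
      intro t ht
      rw [(hD'' t).deriv, hodeJ t ht, hode₁ t ht, hode₂ t ht, hDdef]
      ring
    have hD0 : D 0 = 0 := by simp [hDdef, hJ0, hJ₁0, hJ₂0]
    have hD'L : deriv D L = 0 := by
      rw [hDderiv]
      simp only
      rw [hJ'L, hv]
      field_simp
      ring
    -- the Wronskian of D and J₂ is constant ≡ 0
    set Wd : ℝ → ℝ := fun t => deriv D t * J₂ t - D t * deriv J₂ t with hWddef
    have hWd' : ∀ t ∈ Icc (0:ℝ) L, HasDerivAt Wd 0 t := by
      intro t ht
      have h := (((hdD2 t).hasDerivAt).mul ((hd1₂ t).hasDerivAt)).sub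
        (((hdD t).hasDerivAt).mul ((hd2₂ t).hasDerivAt))
      refine h.congr_deriv ?_
      rw [hodeD t ht, hode₂ t ht]
      ring
    have hWdconst : ∀ x ∈ Icc (0:ℝ) L, Wd x = Wd 0 := by
      apply constant_of_has_deriv_right_zero
      · exact (((hdD2.continuous.mul hd1₂.continuous).sub
          (hdD.continuous.mul hd2₂.continuous))).continuousOn
      · intro x hx
        exact (hWd' x (Ico_subset_Icc_self hx)).hasDerivWithinAt
    have hWd0 : Wd 0 = 0 := by simp [hWddef, hD0, hJ₂0]
    have hWdzero : ∀ x ∈ Icc (0:ℝ) L, deriv D x * J₂ x - D x * deriv J₂ x = 0 := by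
      intro x hx
      have := hWdconst x hx
      rw [hWd0] at this
      exact this
    have hDL : D L = 0 := by
      have h := hWdzero L ⟨hL.le, le_rfl⟩
      rw [hD'L] at h
      have : D L * deriv J₂ L = 0 := by linarith
      exact (mul_eq_zero.mp this).resolve_right hJ2Lne
    -- conclude D s = 0
    have hDs : D s = 0 := by
      rcases eq_or_lt_of_le hs.1 with h | h
      · rw [← h]; exact hD0
      · -- s > 0 : D / J₂ is constant on [s, L]
        have hJ₂sne : J₂ s ≠ 0 := ne_of_gt (hJ₂pos s ⟨h, hs.2⟩)
        have hconst : ∀ x ∈ Icc s L, D x / J₂ x = D s / J₂ s := by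
          apply constant_of_has_deriv_right_zero
          · apply ContinuousOn.div hdD.continuous.continuousOn
              hd1₂.continuous.continuousOn
            intro t ht
            exact ne_of_gt (hJ₂pos t ⟨lt_of_lt_of_le h ht.1, ht.2⟩)
          · intro x hx
            have hxmem : x ∈ Icc (0:ℝ) L := ⟨(h.trans_le hx.1).le, hx.2.le⟩
            have hxne : J₂ x ≠ 0 := ne_of_gt (hJ₂pos x ⟨h.trans_le hx.1, hx.2.le⟩)
            have hdiv := ((hdD x).hasDerivAt).div ((hd1₂ x).hasDerivAt) hxne
            have h0 : deriv D x * J₂ x - D x * deriv J₂ x = 0 := hWdzero x hxmem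
            rw [h0, zero_div] at hdiv
            exact hdiv.hasDerivWithinAt
        have hL' := hconst L ⟨hs.2, le_rfl⟩
        rw [hDL, zero_div] at hL'
        have := hL'.symm
        exact (div_eq_zero_iff.mp this).resolve_right hJ₂sne
    have : J s - (J₁ s + v * J₂ s) = 0 := hDs
    linarith
end

section
/- Any solution of J'' = q(s)J with J(0) = 0, J'(0) = 1 and |q| ≤ K satisfies the two-sided derivative bounds cos(√K s) ≤ J'(s) ≤ cosh(√K s) for all s ∈ [0, min(L, π/(2√K))]. -/
open Real Set


open Filter Topology


private lemma hasDerivAt_sin_mul (r t : ℝ) :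
    HasDerivAt (fun t => Real.sin (r*t)) (r * Real.cos (r*t)) t := by
  simpa [mul_comm, Function.comp_def] using (Real.hasDerivAt_sin (r*t)).comp t ((hasDerivAt_id t).const_mul r)

private lemma hasDerivAt_cos_mul (r t : ℝ) :
    HasDerivAt (fun t => Real.cos (r*t)) (-(r * Real.sin (r*t))) t := by
  simpa [mul_comm, Function.comp_def] using (Real.hasDerivAt_cos (r*t)).comp t ((hasDerivAt_id t).const_mul r)

private lemma deriv_differentiable {J : ℝ → ℝ} (hJ : ContDiff ℝ 2 J) :
    Differentiable ℝ (deriv J) := by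
  have h : ContDiff ℝ (1+1) J := by norm_num [hJ]
  exact ((contDiff_succ_iff_deriv.mp h).2.2).differentiable one_ne_zero

private lemma aux_low (K : ℝ) (hK : 0 < K) (q J : ℝ → ℝ) (hJ : ContDiff ℝ 2 J)
    (b : ℝ) (hb : 0 < b) (hbπ : b ≤ π / (2 * Real.sqrt K))
    (hode : ∀ s ∈ Icc 0 b, deriv (deriv J) s = q s * J s)
    (hqK : ∀ s ∈ Icc 0 b, |q s| ≤ K)
    (h0 : J 0 = 0) (h1 : deriv J 0 = 1)
    (hpos : ∀ t ∈ Icc 0 b, 0 ≤ J t) :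
    ∀ t ∈ Icc 0 b, Real.sin (Real.sqrt K * t) / Real.sqrt K ≤ J t ∧
      Real.cos (Real.sqrt K * t) ≤ deriv J t := by
  set r := Real.sqrt K with hrdef
  have hr : 0 < r := Real.sqrt_pos.2 hK
  have hrK : r * r = K := Real.mul_self_sqrt hK.le
  have hbhalf : r * b ≤ π/2 := by
    rw [mul_comm, ← le_div_iff₀ hr]; simpa [div_div] using hbπ
  have hd1 : Differentiable ℝ J := hJ.differentiable (by norm_num)
  have hd2 : Differentiable ℝ (deriv J) := deriv_differentiable hJ
  have hJ' : ∀ t, HasDerivAt J (deriv J t) t := fun t => (hd1 t).hasDerivAt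
  have hJ'' : ∀ t, HasDerivAt (deriv J) (deriv (deriv J) t) t := fun t => (hd2 t).hasDerivAt
  -- Wronskian W = J' sin(rt) - J * (r cos(rt))
  have hW : ∀ t, HasDerivAt (fun t => deriv J t * Real.sin (r*t) - J t * (r * Real.cos (r*t)))
      (deriv (deriv J) t * Real.sin (r*t) + J t * ((r*r) * Real.sin (r*t))) t := by
    intro t
    have h1 := (hJ'' t).mul (hasDerivAt_sin_mul r t)
    have h2 := (hJ' t).mul ((hasDerivAt_cos_mul r t).const_mul r)
    exact (h1.sub h2).congr_deriv (by ring)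
  have hsinnn : ∀ t ∈ Icc 0 b, 0 ≤ Real.sin (r*t) := by
    intro t ht
    refine Real.sin_nonneg_of_nonneg_of_le_pi (mul_nonneg hr.le ht.1) ?_
    have : r * t ≤ r * b := by nlinarith [ht.2]
    nlinarith [Real.pi_pos]
  have hsinpos : ∀ t, 0 < t → t ≤ b → 0 < Real.sin (r*t) := by
    intro t ht htb
    refine Real.sin_pos_of_pos_of_lt_pi (mul_pos hr ht) ?_
    have : r * t ≤ r * b := by nlinarith
    nlinarith [Real.pi_pos]
  have hcosnn : ∀ t ∈ Icc 0 b, 0 ≤ Real.cos (r*t) := by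
    intro t ht
    apply Real.cos_nonneg_of_mem_Icc
    constructor
    · nlinarith [ht.1, Real.pi_pos]
    · have : r * t ≤ r * b := by nlinarith [ht.2]
      linarith
  have hWc : Continuous (fun t => deriv J t * Real.sin (r*t) - J t * (r * Real.cos (r*t))) := by
    apply Continuous.sub
    · exact hd2.continuous.mul (Real.continuous_sin.comp (continuous_const.mul continuous_id))
    · exact hd1.continuous.mul (continuous_const.mul
        (Real.continuous_cos.comp (continuous_const.mul continuous_id)))
  have hWmono : MonotoneOn (fun t => deriv J t * Real.sin (r*t) - J t * (r * Real.cos (r*t)))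
      (Icc 0 b) := by
    apply monotoneOn_of_deriv_nonneg (convex_Icc 0 b) hWc.continuousOn
    · intro t _; exact (hW t).differentiableAt.differentiableWithinAt
    · intro t ht
      rw [interior_Icc] at ht
      have htm : t ∈ Icc (0:ℝ) b := ⟨ht.1.le, ht.2.le⟩
      rw [(hW t).deriv, hode t htm]
      rw [hrK]
      have hq := abs_le.mp (hqK t htm)
      have hJt := hpos t htm
      have hst := hsinnn t htm
      nlinarith [mul_nonneg (show (0:ℝ) ≤ q t + K by linarith [hq.1]) (mul_nonneg hJt hst)]
  have hWnn : ∀ t ∈ Icc 0 b, 0 ≤ deriv J t * Real.sin (r*t) - J t * (r * Real.cos (r*t)) := by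
    intro t ht
    have h2 := hWmono ⟨le_rfl, hb.le⟩ ht ht.1
    simp only [h0] at h2
    simpa using h2
  -- ratio J t / sin (r t) is monotone on (0, b]
  have hRd : ∀ s, 0 < s → s ≤ b → HasDerivAt (fun u => J u / Real.sin (r*u))
      ((deriv J s * Real.sin (r*s) - J s * (r * Real.cos (r*s))) / (Real.sin (r*s))^2) s := by
    intro s hs hsb
    exact (hJ' s).div (hasDerivAt_sin_mul r s) (ne_of_gt (hsinpos s hs hsb))
  have hRmono : ∀ t, 0 < t → t ≤ b → ∀ u, 0 < u → u ≤ t →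
      J u / Real.sin (r*u) ≤ J t / Real.sin (r*t) := by
    intro t ht htb u hu hut
    have hmono : MonotoneOn (fun u => J u / Real.sin (r*u)) (Icc u t) := by
      apply monotoneOn_of_deriv_nonneg (convex_Icc u t)
      · apply ContinuousOn.div hd1.continuous.continuousOn
          (Real.continuous_sin.comp (continuous_const.mul continuous_id)).continuousOn
        intro s hs
        exact ne_of_gt (hsinpos s (lt_of_lt_of_le hu hs.1) (le_trans hs.2 htb))
      · intro s hs
        rw [interior_Icc] at hs
        exact (hRd s (hu.trans hs.1) (hs.2.le.trans htb)).differentiableAt.differentiableWithinAt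
      · intro s hs
        rw [interior_Icc] at hs
        have hs0 : 0 < s := hu.trans hs.1
        have hsb : s ≤ b := hs.2.le.trans htb
        rw [(hRd s hs0 hsb).deriv]
        exact div_nonneg (hWnn s ⟨hs0.le, hsb⟩) (sq_nonneg _)
    exact hmono ⟨le_rfl, hut⟩ ⟨hut, le_rfl⟩ hut
  -- limit of ratio at 0+ is 1/r
  have hlim : Tendsto (fun u => J u / Real.sin (r*u)) (𝓝[>] (0:ℝ)) (𝓝 (1/r)) := by
    have hmem : Ioi (0:ℝ) ⊆ {(0:ℝ)}ᶜ := fun x hx => ne_of_gt hx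
    have ht1 : Tendsto (fun u => J u / u) (𝓝[>] (0:ℝ)) (𝓝 1) := by
      have := (hasDerivAt_iff_tendsto_slope.mp (hJ' 0)).mono_left
        (nhdsWithin_mono 0 hmem)
      rw [h1] at this
      refine this.congr (fun u => ?_)
      simp [slope_def_field, h0]
    have ht2 : Tendsto (fun u => Real.sin (r*u) / u) (𝓝[>] (0:ℝ)) (𝓝 r) := by
      have hder := hasDerivAt_sin_mul r 0
      have := (hasDerivAt_iff_tendsto_slope.mp hder).mono_left (nhdsWithin_mono 0 hmem)
      simp at this
      refine this.congr (fun u => ?_)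
      simp [slope_def_field]
    have hdiv := ht1.div ht2 (ne_of_gt hr)
    refine hdiv.congr' ?_
    filter_upwards [self_mem_nhdsWithin] with u hu
    have hu0 : (u:ℝ) ≠ 0 := ne_of_gt hu
    simp only [Pi.div_apply]; field_simp
  have hkey : ∀ t, 0 < t → t ≤ b → Real.sin (r*t) / r ≤ J t := by
    intro t ht htb
    have hev : ∀ᶠ u in 𝓝[>] (0:ℝ), J u / Real.sin (r*u) ≤ J t / Real.sin (r*t) := by
      filter_upwards [Ioc_mem_nhdsGT_of_mem ⟨le_rfl, ht⟩] with u hu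
      exact hRmono t ht htb u hu.1 hu.2
    have hle : 1/r ≤ J t / Real.sin (r*t) := le_of_tendsto hlim hev
    have hsp := hsinpos t ht htb
    have h2 := (le_div_iff₀ hsp).mp hle
    calc Real.sin (r*t)/r = 1/r * Real.sin (r*t) := by ring
    _ ≤ J t := h2
  intro t ht
  rcases eq_or_lt_of_le ht.1 with h|h
  · constructor <;> simp [← h, h0, h1]
  · refine ⟨hkey t h ht.2, ?_⟩
    have hWt := hWnn t ht
    have hc := hcosnn t ht
    have hsp := hsinpos t h ht.2
    have hk : Real.sin (r*t) ≤ J t * r := (div_le_iff₀ hr).mp (hkey t h ht.2)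
    nlinarith [mul_le_mul_of_nonneg_right hk hc, hWt, hsp]

private lemma hasDerivAt_sinh_mul (r t : ℝ) :
    HasDerivAt (fun t => Real.sinh (r*t)) (r * Real.cosh (r*t)) t := by
  simpa [mul_comm, Function.comp_def] using (Real.hasDerivAt_sinh (r*t)).comp t ((hasDerivAt_id t).const_mul r)

private lemma hasDerivAt_cosh_mul (r t : ℝ) :
    HasDerivAt (fun t => Real.cosh (r*t)) (r * Real.sinh (r*t)) t := by
  simpa [mul_comm, Function.comp_def] using (Real.hasDerivAt_cosh (r*t)).comp t ((hasDerivAt_id t).const_mul r)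

private lemma aux_high (K : ℝ) (hK : 0 < K) (q J : ℝ → ℝ) (hJ : ContDiff ℝ 2 J)
    (b : ℝ) (hb : 0 < b)
    (hode : ∀ s ∈ Icc 0 b, deriv (deriv J) s = q s * J s)
    (hqK : ∀ s ∈ Icc 0 b, |q s| ≤ K)
    (h0 : J 0 = 0) (h1 : deriv J 0 = 1)
    (hpos : ∀ t ∈ Icc 0 b, 0 ≤ J t) :
    ∀ t ∈ Icc 0 b, deriv J t ≤ Real.cosh (Real.sqrt K * t) := by
  set r := Real.sqrt K with hrdef
  have hr : 0 < r := Real.sqrt_pos.2 hK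
  have hrK : r * r = K := Real.mul_self_sqrt hK.le
  have hd1 : Differentiable ℝ J := hJ.differentiable (by norm_num)
  have hd2 : Differentiable ℝ (deriv J) := deriv_differentiable hJ
  have hJ' : ∀ t, HasDerivAt J (deriv J t) t := fun t => (hd1 t).hasDerivAt
  have hJ'' : ∀ t, HasDerivAt (deriv J) (deriv (deriv J) t) t := fun t => (hd2 t).hasDerivAt
  have hW : ∀ t, HasDerivAt (fun t => deriv J t * Real.sinh (r*t) - J t * (r * Real.cosh (r*t)))
      (deriv (deriv J) t * Real.sinh (r*t) - J t * ((r*r) * Real.sinh (r*t))) t := by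
    intro t
    have h1 := (hJ'' t).mul (hasDerivAt_sinh_mul r t)
    have h2 := (hJ' t).mul ((hasDerivAt_cosh_mul r t).const_mul r)
    exact (h1.sub h2).congr_deriv (by ring)
  have hshnn : ∀ t ∈ Icc (0:ℝ) b, 0 ≤ Real.sinh (r*t) := by
    intro t ht
    exact Real.sinh_nonneg_iff.2 (mul_nonneg hr.le ht.1)
  have hshpos : ∀ t : ℝ, 0 < t → 0 < Real.sinh (r*t) :=
    fun t ht => Real.sinh_pos_iff.2 (mul_pos hr ht)
  have hWc : Continuous (fun t => deriv J t * Real.sinh (r*t) - J t * (r * Real.cosh (r*t))) := by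
    apply Continuous.sub
    · exact hd2.continuous.mul (Real.continuous_sinh.comp (continuous_const.mul continuous_id))
    · exact hd1.continuous.mul (continuous_const.mul
        (Real.continuous_cosh.comp (continuous_const.mul continuous_id)))
  have hWanti : AntitoneOn (fun t => deriv J t * Real.sinh (r*t) - J t * (r * Real.cosh (r*t)))
      (Icc 0 b) := by
    apply antitoneOn_of_deriv_nonpos (convex_Icc 0 b) hWc.continuousOn
    · intro t _; exact (hW t).differentiableAt.differentiableWithinAt
    · intro t ht
      rw [interior_Icc] at ht
      have htm : t ∈ Icc (0:ℝ) b := ⟨ht.1.le, ht.2.le⟩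
      rw [(hW t).deriv, hode t htm, hrK]
      have hq := abs_le.mp (hqK t htm)
      have hJt := hpos t htm
      have hst := hshnn t htm
      nlinarith [mul_nonneg (show (0:ℝ) ≤ K - q t by linarith [hq.2]) (mul_nonneg hJt hst)]
  have hWnp : ∀ t ∈ Icc (0:ℝ) b, deriv J t * Real.sinh (r*t) - J t * (r * Real.cosh (r*t)) ≤ 0 := by
    intro t ht
    have h2 := hWanti ⟨le_rfl, hb.le⟩ ht ht.1
    simp only [h0] at h2
    simpa using h2
  have hRd : ∀ s : ℝ, 0 < s → HasDerivAt (fun u => J u / Real.sinh (r*u))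
      ((deriv J s * Real.sinh (r*s) - J s * (r * Real.cosh (r*s))) / (Real.sinh (r*s))^2) s := by
    intro s hs
    exact (hJ' s).div (hasDerivAt_sinh_mul r s) (ne_of_gt (hshpos s hs))
  have hRanti : ∀ t, 0 < t → t ≤ b → ∀ u, 0 < u → u ≤ t →
      J t / Real.sinh (r*t) ≤ J u / Real.sinh (r*u) := by
    intro t ht htb u hu hut
    have hmono : AntitoneOn (fun u => J u / Real.sinh (r*u)) (Icc u t) := by
      apply antitoneOn_of_deriv_nonpos (convex_Icc u t)
      · apply ContinuousOn.div hd1.continuous.continuousOn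
          (Real.continuous_sinh.comp (continuous_const.mul continuous_id)).continuousOn
        intro s hs
        exact ne_of_gt (hshpos s (lt_of_lt_of_le hu hs.1))
      · intro s hs
        rw [interior_Icc] at hs
        exact (hRd s (hu.trans hs.1)).differentiableAt.differentiableWithinAt
      · intro s hs
        rw [interior_Icc] at hs
        have hs0 : 0 < s := hu.trans hs.1
        have hsb : s ≤ b := hs.2.le.trans htb
        rw [(hRd s hs0).deriv]
        exact div_nonpos_of_nonpos_of_nonneg (hWnp s ⟨hs0.le, hsb⟩) (sq_nonneg _)
    exact hmono ⟨le_rfl, hut⟩ ⟨hut, le_rfl⟩ hut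
  have hlim : Filter.Tendsto (fun u => J u / Real.sinh (r*u)) (𝓝[>] (0:ℝ)) (𝓝 (1/r)) := by
    have hmem : Ioi (0:ℝ) ⊆ {(0:ℝ)}ᶜ := fun x hx => ne_of_gt hx
    have ht1 : Filter.Tendsto (fun u => J u / u) (𝓝[>] (0:ℝ)) (𝓝 1) := by
      have := (hasDerivAt_iff_tendsto_slope.mp (hJ' 0)).mono_left (nhdsWithin_mono 0 hmem)
      rw [h1] at this
      refine this.congr (fun u => ?_)
      simp [slope_def_field, h0]
    have ht2 : Filter.Tendsto (fun u => Real.sinh (r*u) / u) (𝓝[>] (0:ℝ)) (𝓝 r) := by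
      have hder := hasDerivAt_sinh_mul r 0
      have := (hasDerivAt_iff_tendsto_slope.mp hder).mono_left (nhdsWithin_mono 0 hmem)
      simp at this
      refine this.congr (fun u => ?_)
      simp [slope_def_field]
    have hdiv := ht1.div ht2 (ne_of_gt hr)
    refine hdiv.congr' ?_
    filter_upwards [self_mem_nhdsWithin] with u hu
    have hu0 : (u:ℝ) ≠ 0 := ne_of_gt hu
    simp only [Pi.div_apply]; field_simp
  have hkey : ∀ t, 0 < t → t ≤ b → J t ≤ Real.sinh (r*t) / r := by
    intro t ht htb
    have hev : ∀ᶠ u in 𝓝[>] (0:ℝ), J t / Real.sinh (r*t) ≤ J u / Real.sinh (r*u) := by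
      filter_upwards [Ioc_mem_nhdsGT_of_mem ⟨le_rfl, ht⟩] with u hu
      exact hRanti t ht htb u hu.1 hu.2
    have hle : J t / Real.sinh (r*t) ≤ 1/r := ge_of_tendsto hlim hev
    have hsp := hshpos t ht
    have h2 := (div_le_iff₀ hsp).mp hle
    calc J t ≤ 1/r * Real.sinh (r*t) := h2
    _ = Real.sinh (r*t) / r := by ring
  intro t ht
  rcases eq_or_lt_of_le ht.1 with h|h
  · simp [← h, h0, h1]
  · have hWt := hWnp t ht
    have hc : (0:ℝ) < Real.cosh (r*t) := Real.cosh_pos (r*t)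
    have hsp := hshpos t h
    have hk : J t * r ≤ Real.sinh (r*t) := by
      have := hkey t h ht.2
      rw [le_div_iff₀ hr] at this
      exact this
    nlinarith [mul_le_mul_of_nonneg_right hk hc.le, hWt, hsp]

private lemma aux_pos (L K : ℝ) (hL : 0 < L) (hK : 0 < K)
    (q : ℝ → ℝ) (hqK : ∀ s ∈ Icc 0 L, |q s| ≤ K)
    (J : ℝ → ℝ) (hJ : ContDiff ℝ 2 J)
    (hode : ∀ s ∈ Icc 0 L, deriv (deriv J) s = q s * J s)
    (h0 : J 0 = 0) (h1 : deriv J 0 = 1) :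
    ∀ t ∈ Icc 0 (min L (π / (2 * Real.sqrt K))), 0 ≤ J t := by
  set r := Real.sqrt K with hrdef
  have hr : 0 < r := Real.sqrt_pos.2 hK
  set T := min L (π / (2 * r)) with hTdef
  have hT0 : 0 < T := lt_min hL (by positivity)
  have hTL : T ≤ L := min_le_left _ _
  have hTπ : T ≤ π / (2 * r) := min_le_right _ _
  have hd1 : Differentiable ℝ J := hJ.differentiable (by norm_num)
  by_contra hcon
  push_neg at hcon
  obtain ⟨t₁, ht₁, ht₁neg⟩ := hcon
  have ht₁0 : 0 < t₁ := by
    rcases eq_or_lt_of_le ht₁.1 with h|h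
    · exfalso; rw [← h, h0] at ht₁neg; exact lt_irrefl 0 ht₁neg
    · exact h
  -- J is positive just to the right of 0
  have hsl : Filter.Tendsto (fun u => J u / u) (𝓝[>] (0:ℝ)) (𝓝 1) := by
    have hmem : Ioi (0:ℝ) ⊆ {(0:ℝ)}ᶜ := fun x hx => ne_of_gt hx
    have := (hasDerivAt_iff_tendsto_slope.mp (hd1 0).hasDerivAt).mono_left
      (nhdsWithin_mono 0 hmem)
    rw [h1] at this
    refine this.congr (fun u => ?_)
    simp [slope_def_field, h0]
  have hev : ∀ᶠ u in 𝓝[>] (0:ℝ), 0 < J u := by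
    filter_upwards [hsl.eventually (lt_mem_nhds (show (1:ℝ)/2 < 1 by norm_num)),
      self_mem_nhdsWithin] with u h1u h2u
    have hu0 : (0:ℝ) < u := h2u
    have hJu : 0 < J u / u := lt_trans (by norm_num) h1u
    have := mul_pos hJu hu0
    rwa [div_mul_cancel₀ _ (ne_of_gt hu0)] at this
  obtain ⟨δ, hδ, hsub⟩ := mem_nhdsGT_iff_exists_Ioo_subset.mp hev
  rw [mem_Ioi] at hδ
  have hδt₁ : δ ≤ t₁ := by
    by_contra hlt
    push_neg at hlt
    exact absurd (hsub ⟨ht₁0, hlt⟩) (not_lt.2 ht₁neg.le)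
  -- first nonpositive point
  set S := Icc δ T ∩ J ⁻¹' (Iic 0) with hSdef
  have hSclosed : IsClosed S := isClosed_Icc.inter (isClosed_Iic.preimage hd1.continuous)
  have hSne : S.Nonempty := ⟨t₁, ⟨hδt₁, ht₁.2⟩, ht₁neg.le⟩
  have hSbdd : BddBelow S := (bddBelow_Icc (a := T) (b := δ)).mono inter_subset_left
  set t₀ := sInf S with ht₀def
  have ht₀S : t₀ ∈ S := hSclosed.csInf_mem hSne hSbdd
  have hδt₀ : δ ≤ t₀ := ht₀S.1.1
  have ht₀T : t₀ ≤ T := ht₀S.1.2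
  have ht₀pos : 0 < t₀ := lt_of_lt_of_le hδ hδt₀
  have hposIoo : ∀ t ∈ Ioo (0:ℝ) t₀, 0 < J t := by
    intro t ht
    rcases lt_or_ge t δ with h|h
    · exact hsub ⟨ht.1, h⟩
    · by_contra hle
      push_neg at hle
      have : t ∈ S := ⟨⟨h, ht.2.le.trans ht₀T⟩, hle⟩
      exact absurd (csInf_le hSbdd this) (not_le.2 ht.2)
  have hJt₀nn : 0 ≤ J t₀ := by
    have htend : Filter.Tendsto J (𝓝[<] t₀) (𝓝 (J t₀)) :=
      (hd1.continuous.tendsto t₀).mono_left nhdsWithin_le_nhds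
    refine ge_of_tendsto htend ?_
    filter_upwards [Ioo_mem_nhdsLT_of_mem (show t₀ ∈ Ioc 0 t₀ from ⟨ht₀pos, le_rfl⟩)] with t ht
    exact (hposIoo t ht).le
  have hJt₀ : J t₀ = 0 := le_antisymm ht₀S.2 hJt₀nn
  -- apply the lower comparison on [0, t₀]
  have hpos' : ∀ t ∈ Icc (0:ℝ) t₀, 0 ≤ J t := by
    intro t ht
    rcases eq_or_lt_of_le ht.1 with h|h
    · rw [← h, h0]
    · rcases eq_or_lt_of_le ht.2 with h2|h2
      · rw [h2]; exact hJt₀nn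
      · exact (hposIoo t ⟨h, h2⟩).le
  have hlow := aux_low K hK q J hJ t₀ ht₀pos (ht₀T.trans hTπ)
    (fun s hs => hode s ⟨hs.1, hs.2.trans (ht₀T.trans hTL)⟩)
    (fun s hs => hqK s ⟨hs.1, hs.2.trans (ht₀T.trans hTL)⟩) h0 h1 hpos'
  have := (hlow t₀ ⟨ht₀pos.le, le_rfl⟩).1
  rw [hJt₀] at this
  have hsinpos : 0 < Real.sin (r * t₀) := by
    refine Real.sin_pos_of_pos_of_lt_pi (mul_pos hr ht₀pos) ?_
    have h2 : r * t₀ ≤ r * (π / (2*r)) := by nlinarith [ht₀T.trans hTπ]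
    have h3 : r * (π / (2*r)) = π/2 := by field_simp
    nlinarith [Real.pi_pos]
  nlinarith [div_pos hsinpos hr]

/-- any solution of `J'' = q(s) J`, `J(0) = 0`, `J'(0) = 1`,
with `|q| ≤ K`, satisfies the two-sided comparison bounds
`cos(√K s) ≤ J'(s) ≤ cosh(√K s)` for all `s ∈ [0, min(L, π/(2√K))]`. -/
theorem shooting_deriv_comparison (L K : ℝ) (hL : 0 < L) (hK : 0 < K)
    (q : ℝ → ℝ) (hq : ContinuousOn q (Icc 0 L))
    (hqK : ∀ s ∈ Icc 0 L, |q s| ≤ K)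
    (J : ℝ → ℝ) (hJ : ContDiff ℝ 2 J)
    (hode : ∀ s ∈ Icc 0 L, deriv (deriv J) s = q s * J s)
    (h0 : J 0 = 0) (h1 : deriv J 0 = 1) :
    ∀ s ∈ Icc 0 (min L (π / (2 * Real.sqrt K))),
      Real.cos (Real.sqrt K * s) ≤ deriv J s ∧
      deriv J s ≤ Real.cosh (Real.sqrt K * s) := by
  have hr : 0 < Real.sqrt K := Real.sqrt_pos.2 hK
  set T := min L (π / (2 * Real.sqrt K)) with hTdef
  have hT0 : 0 < T := lt_min hL (by positivity)
  have hTL : T ≤ L := min_le_left _ _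
  have hTπ : T ≤ π / (2 * Real.sqrt K) := min_le_right _ _
  have hpos := aux_pos L K hL hK q hqK J hJ hode h0 h1
  have hode' : ∀ s ∈ Icc (0:ℝ) T, deriv (deriv J) s = q s * J s :=
    fun s hs => hode s ⟨hs.1, hs.2.trans hTL⟩
  have hqK' : ∀ s ∈ Icc (0:ℝ) T, |q s| ≤ K :=
    fun s hs => hqK s ⟨hs.1, hs.2.trans hTL⟩
  have hlow := aux_low K hK q J hJ T hT0 hTπ hode' hqK' h0 h1 hpos
  have hhigh := aux_high K hK q J hJ T hT0 hode' hqK' h0 h1 hpos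
  intro s hs
  exact ⟨(hlow s hs).2, hhigh s hs⟩
end
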